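/- Let α and Φ be positive integers and let K : {1, 2, …, Φ} → ℕ be a sequence of natural numbers with K_φ ≤ α for every φ. Let m ∈ {1, …, Φ} be an index maximizing K_φ · 2^φ (i.e., K_φ · 2^φ ≤ K_m · 2^m for all φ ∈ {1, …, Φ}). Then ∑_{φ=1}^{Φ} K_φ · 2^φ ≤ (log₂(α) + 3) · K_m · 2^m, where log₂ denotes the real base-2 logarithm. -/

import Mathlib

open Finset

lemma sum_two_pow_Icc (p : ℕ) : ∑ φ ∈ Finset.Icc 1 p, 2 ^ φ ≤ 2 ^ (p + 1) := by
  induction p with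
  | zero => simp
  | succ n ih =>
    rw [Finset.sum_Icc_succ_top (by omega)]
    have : (2:ℕ) ^ (n + 1) + 2 ^ (n + 1) = 2 ^ (n + 2) := by ring
    omega

lemma key_nat (α Φ : ℕ) (hα : 0 < α) (K : ℕ → ℕ)
    (hK : ∀ φ ∈ Finset.Icc 1 Φ, K φ ≤ α)
    (m : ℕ) (hm : m ∈ Finset.Icc 1 Φ)
    (hmax : ∀ φ ∈ Finset.Icc 1 Φ, K φ * 2 ^ φ ≤ K m * 2 ^ m)
    (hKm : 0 < K m) :
    ∑ φ ∈ Finset.Icc 1 Φ, K φ * 2 ^ φ ≤ (Nat.clog 2 α + 2) * (K m * 2 ^ m) := by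
  set M := K m * 2 ^ m with hM
  have hMpos : 0 < M := Nat.mul_pos hKm (Nat.two_pow_pos m)
  set L := Nat.log 2 M with hL
  set a := Nat.clog 2 α with ha
  set p := L - a with hp
  have h2L : 2 ^ L ≤ M := Nat.pow_log_le_self 2 hMpos.ne'
  have hML : M < 2 ^ (L + 1) := Nat.lt_pow_succ_log_self (by norm_num) M
  have hαa : α ≤ 2 ^ a := Nat.le_pow_clog (by norm_num) α
  rw [← Finset.sum_filter_add_sum_filter_not (Finset.Icc 1 Φ) (fun φ => φ ≤ p)]
  have low : ∑ φ ∈ (Finset.Icc 1 Φ).filter (fun φ => φ ≤ p), K φ * 2 ^ φ ≤ 2 * M := by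
    calc ∑ φ ∈ (Finset.Icc 1 Φ).filter (fun φ => φ ≤ p), K φ * 2 ^ φ
        ≤ ∑ φ ∈ (Finset.Icc 1 Φ).filter (fun φ => φ ≤ p), α * 2 ^ φ := by
          refine Finset.sum_le_sum fun x hx => ?_
          exact Nat.mul_le_mul_right _ (hK x (Finset.mem_filter.mp hx).1)
      _ ≤ ∑ φ ∈ Finset.Icc 1 p, α * 2 ^ φ := by
          refine Finset.sum_le_sum_of_subset ?_
          intro x hx
          simp only [Finset.mem_filter, Finset.mem_Icc] at hx ⊢
          omega
      _ ≤ 2 * M := by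
          rcases le_or_gt a L with hal | hal
          · calc ∑ φ ∈ Finset.Icc 1 p, α * 2 ^ φ
                = α * ∑ φ ∈ Finset.Icc 1 p, 2 ^ φ := by rw [Finset.mul_sum]
              _ ≤ 2 ^ a * 2 ^ (p + 1) := Nat.mul_le_mul hαa (sum_two_pow_Icc p)
              _ = 2 ^ (a + p + 1) := by ring
              _ ≤ 2 ^ (L + 1) := Nat.pow_le_pow_right (by norm_num) (by omega)
              _ = 2 * 2 ^ L := by ring
              _ ≤ 2 * M := by gcongr
          · have hp0 : p = 0 := by omega
            rw [hp0]
            simp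
  have high : ∑ φ ∈ (Finset.Icc 1 Φ).filter (fun φ => ¬ φ ≤ p), K φ * 2 ^ φ ≤ a * M := by
    set T := (Finset.Icc 1 Φ).filter (fun φ => ¬ φ ≤ p) with hT
    have hz : ∑ φ ∈ T.filter (fun φ => φ ≤ L), K φ * 2 ^ φ = ∑ φ ∈ T, K φ * 2 ^ φ := by
      apply Finset.sum_filter_of_ne
      intro x hx hne
      have hx' : x ∈ Finset.Icc 1 Φ := (Finset.mem_filter.mp hx).1
      have h1 : 1 ≤ K x := by
        rcases Nat.eq_zero_or_pos (K x) with h | h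
        · simp [h] at hne
        · exact h
      have h2x : 2 ^ x ≤ M := le_trans (Nat.le_mul_of_pos_left _ h1) (hmax x hx')
      by_contra h
      have : 2 ^ (L + 1) ≤ 2 ^ x := Nat.pow_le_pow_right (by norm_num) (by omega)
      omega
    rw [← hz]
    calc ∑ φ ∈ T.filter (fun φ => φ ≤ L), K φ * 2 ^ φ
        ≤ ∑ _φ ∈ T.filter (fun φ => φ ≤ L), M := by
          refine Finset.sum_le_sum fun x hx => ?_
          exact hmax x (Finset.mem_filter.mp (Finset.mem_filter.mp hx).1).1
      _ = (T.filter (fun φ => φ ≤ L)).card * M := by rw [Finset.sum_const, smul_eq_mul]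
      _ ≤ a * M := by
          refine Nat.mul_le_mul_right _ ?_
          have hsub : T.filter (fun φ => φ ≤ L) ⊆ Finset.Icc (p + 1) L := by
            intro x hx
            simp only [hT, Finset.mem_filter, Finset.mem_Icc] at hx ⊢
            omega
          calc (T.filter (fun φ => φ ≤ L)).card ≤ (Finset.Icc (p + 1) L).card :=
                Finset.card_le_card hsub
            _ = L - p := by rw [Nat.card_Icc]; omega
            _ ≤ a := by omega
  calc ∑ φ ∈ (Finset.Icc 1 Φ).filter (fun φ => φ ≤ p), K φ * 2 ^ φ
        + ∑ φ ∈ (Finset.Icc 1 Φ).filter (fun φ => ¬ φ ≤ p), K φ * 2 ^ φ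
      ≤ 2 * M + a * M := Nat.add_le_add low high
    _ = (a + 2) * M := by ring

lemma clog_le_logb (α : ℕ) (hα : 0 < α) :
    (Nat.clog 2 α : ℝ) ≤ Real.logb 2 α + 1 := by
  rcases Nat.lt_or_ge α 2 with h | h
  · interval_cases α
    simp [Nat.clog]
  · have hc1 : 1 ≤ Nat.clog 2 α := Nat.clog_pos (by norm_num) h
    have h2 : 2 ^ (Nat.clog 2 α - 1) < α :=
      Nat.pow_pred_clog_lt_self (by norm_num) (by omega)
    have h2' : (2:ℝ) ^ (Nat.clog 2 α - 1) < (α:ℝ) := by exact_mod_cast h2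
    have hlog : Real.logb 2 ((2:ℝ) ^ (Nat.clog 2 α - 1)) < Real.logb 2 α :=
      Real.logb_lt_logb (by norm_num) (by positivity) h2'
    have hb : Real.logb 2 2 = 1 := Real.logb_self_eq_one (by norm_num : (1:ℝ) < 2)
    rw [Real.logb_pow, hb, mul_one] at hlog
    have hcast : ((Nat.clog 2 α - 1 : ℕ) : ℝ) = (Nat.clog 2 α : ℝ) - 1 := by
      rw [Nat.cast_sub hc1]; norm_num
    rw [hcast] at hlog
    linarith

theorem stmt_0 (α Φ : ℕ) (hα : 0 < α) (hΦ : 0 < Φ) (K : ℕ → ℕ)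
    (hK : ∀ φ ∈ Finset.Icc 1 Φ, K φ ≤ α)
    (m : ℕ) (hm : m ∈ Finset.Icc 1 Φ)
    (hmax : ∀ φ ∈ Finset.Icc 1 Φ, K φ * 2 ^ φ ≤ K m * 2 ^ m) :
    (∑ φ ∈ Finset.Icc 1 Φ, (K φ : ℝ) * 2 ^ φ)
      ≤ (Real.logb 2 α + 3) * ((K m : ℝ) * 2 ^ m) := by
  rcases Nat.eq_zero_or_pos (K m) with hKm | hKm
  · have hz : ∀ φ ∈ Finset.Icc 1 Φ, K φ = 0 := by
      intro φ hφ
      have := hmax φ hφ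
      rw [hKm] at this
      have h2 : 0 < 2 ^ φ := Nat.two_pow_pos φ
      simp at this
      omega
    have hsum : ∑ φ ∈ Finset.Icc 1 Φ, (K φ : ℝ) * 2 ^ φ = 0 :=
      Finset.sum_eq_zero fun φ hφ => by rw [hz φ hφ]; simp
    rw [hsum, hKm]
    norm_num
  · have hkey := key_nat α Φ hα K hK m hm hmax hKm
    have hkey' : (∑ φ ∈ Finset.Icc 1 Φ, (K φ : ℝ) * 2 ^ φ)
        ≤ ((Nat.clog 2 α : ℝ) + 2) * ((K m : ℝ) * 2 ^ m) := by
      have := (Nat.cast_le (α := ℝ)).mpr hkey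
      push_cast at this
      exact this
    have hM : (0:ℝ) ≤ (K m : ℝ) * 2 ^ m := by positivity
    have hc := clog_le_logb α hα
    nlinarith [hkey', hM, hc]
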